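/- Let q and a be complex numbers with |q| < 1 and a ≠ 0. Define α_0 = 1 and α_n = a^{-n} q^{n(n-1)/2} + a^n q^{n(n+1)/2} for n ≥ 1, and β_n = (-aq; q)_n (-1/a; q)_n / (q; q)_{2n} for n ≥ 0. Then (α_n, β_n) form a Bailey pair relative to 1; that is, for every n ≥ 0, β_n = ∑_{r=0}^n α_r / ((q; q)_{n-r} (q; q)_{n+r}). -/

import Mathlib

/-- Finite q-Pochhammer symbol `(a; q)_n = ∏_{k=0}^{n-1} (1 - a q^k)`. -/
noncomputable def qPoch (a q : ℂ) (n : ℕ) : ℂ := ∏ k ∈ Finset.range n, (1 - a * q ^ k)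

def eTri : ℕ → ℕ
  | 0 => 0
  | n+1 => eTri n + n

lemma eTri_succ (n : ℕ) : eTri (n+1) = eTri n + n := rfl

lemma eTri_add (u v : ℕ) : eTri (u + v) = eTri u + eTri v + u * v := by
  induction v with
  | zero => simp [eTri]
  | succ v ih =>
    show eTri ((u+v)+1) = _
    rw [eTri_succ, ih, eTri_succ]; ring

lemma two_eTri (n : ℕ) : 2 * eTri n + 2 * n = n * (n + 1) := by
  induction n with
  | zero => simp [eTri]
  | succ n ih => rw [eTri_succ]; nlinarith [ih]

lemma eTri_eq (r : ℕ) : r * (r - 1) / 2 = eTri r := by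
  cases r with
  | zero => simp [eTri]
  | succ r =>
    have h := two_eTri r
    have : (r+1) * (r+1-1) = 2 * eTri (r+1) := by
      rw [eTri_succ]; simp; nlinarith [h]
    omega

lemma eTri_eq' (r : ℕ) : r * (r + 1) / 2 = eTri (r + 1) := by
  have h := two_eTri r
  have : r * (r+1) = 2 * eTri (r+1) := by rw [eTri_succ]; omega
  omega

lemma exp_a (n : ℕ) : eTri (n+1) + eTri n = n * n := by
  have h := two_eTri n
  rw [eTri_succ]; nlinarith [h]

lemma exp_b (s i : ℕ) : eTri (s+i+2) + eTri s = eTri (i+2) + (s+i+1) * s := by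
  have h1 : eTri (s + i + 2) = eTri (i+2) + eTri s + (i+2)*s := by
    rw [show s + i + 2 = (i+2) + s by ring, eTri_add]
  have h := two_eTri s
  nlinarith [h, h1]

lemma exp_c (n i : ℕ) : eTri (n+1) + eTri (n+1+i) = eTri (i+1) + n*(n+1+i) := by
  have h1 : eTri (n+1+i) = eTri n + eTri (i+1) + n*(i+1) := by
    rw [show n + 1 + i = n + (i+1) by ring, eTri_add]
  have h := two_eTri n
  rw [eTri_succ]
  nlinarith [h, h1]

lemma sum_id_eTri (n : ℕ) : ∑ k ∈ Finset.range n, (k+1) = eTri (n+1) := by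
  induction n with
  | zero => simp [eTri]
  | succ n ih => rw [Finset.sum_range_succ, ih]; rw [show n+1+1 = (n+1)+1 from rfl, eTri_succ, eTri_succ, eTri_succ]


lemma qPoch_succ (a q : ℂ) (n : ℕ) :
    qPoch a q (n+1) = qPoch a q n * (1 - a * q ^ n) := Finset.prod_range_succ _ _

lemma qPoch_q_succ (q : ℂ) (n : ℕ) :
    qPoch q q (n+1) = qPoch q q n * (1 - q ^ (n+1)) := by
  rw [qPoch_succ, pow_succ']

lemma qPoch_zero (a q : ℂ) : qPoch a q 0 = 1 := rfl

lemma qPoch_ne_zero {q : ℂ} (hq : ‖q‖ < 1) (m : ℕ) : qPoch q q m ≠ 0 := by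
  rw [qPoch]
  apply Finset.prod_ne_zero_iff.2
  intro k _
  have h1 : ‖q * q ^ k‖ < 1 := by
    rw [← pow_succ']
    calc ‖q ^ (k+1)‖ = ‖q‖ ^ (k+1) := norm_pow _ _
      _ ≤ ‖q‖ ^ 1 := pow_le_pow_of_le_one (norm_nonneg _) hq.le (by omega)
      _ < 1 := by simpa using hq
  intro h
  rw [sub_eq_zero] at h
  rw [← h] at h1
  simp at h1

noncomputable def G (q : ℂ) (N j : ℕ) : ℂ :=
  qPoch q q N / (qPoch q q j * qPoch q q (N - j))

lemma G_zero {q : ℂ} (hq : ‖q‖ < 1) (N : ℕ) : G q N 0 = 1 := by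
  simp [G, qPoch_zero, div_self (qPoch_ne_zero hq N)]

lemma G_self {q : ℂ} (hq : ‖q‖ < 1) (N : ℕ) : G q N N = 1 := by
  simp [G, qPoch_zero, div_self (qPoch_ne_zero hq N)]

lemma G_symm (q : ℂ) {j N : ℕ} (h : j ≤ N) : G q N (N - j) = G q N j := by
  rw [G, G, Nat.sub_sub_self h, mul_comm]

lemma G_pascal {q : ℂ} (hq : ‖q‖ < 1) (i d : ℕ) :
    G q (i+d+2) (i+1) = G q (i+d+1) (i+1) + q^(d+1) * G q (i+d+1) i := by
  have e1 : i + d + 2 - (i + 1) = d + 1 := by omega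
  have e2 : i + d + 1 - (i + 1) = d := by omega
  have e3 : i + d + 1 - i = d + 1 := by omega
  rw [G, G, G, e1, e2, e3]
  rw [show i+d+2 = (i+d+1)+1 from rfl, qPoch_q_succ]
  rw [qPoch_q_succ q d, qPoch_q_succ q i]
  have h1 := qPoch_ne_zero hq (i+d+1)
  have h2 := qPoch_ne_zero hq i
  have h3 := qPoch_ne_zero hq d
  have h4 : (1 : ℂ) - q^(i+1) ≠ 0 := by
    have := qPoch_ne_zero hq (i+1)
    rw [qPoch_q_succ] at this
    exact right_ne_zero_of_mul this
  have h5 : (1 : ℂ) - q^(d+1) ≠ 0 := by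
    have := qPoch_ne_zero hq (d+1)
    rw [qPoch_q_succ] at this
    exact right_ne_zero_of_mul this
  field_simp
  ring

lemma gauss {q : ℂ} (hq : ‖q‖ < 1) (N : ℕ) (x : ℂ) :
    ∏ k ∈ Finset.range N, (1 + x * q ^ k) =
    ∑ j ∈ Finset.range (N+1), G q N j * q ^ (eTri j) * x ^ j := by
  induction N with
  | zero => simp [G_self hq 0, eTri]
  | succ N ih =>
    symm
    rw [Finset.prod_range_succ, ih, Finset.sum_range_succ', Finset.sum_range_succ,
        mul_add, mul_one, Finset.sum_mul, Finset.sum_range_succ', Finset.sum_range_succ]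
    have hterm : ∀ i ∈ Finset.range N,
        G q (N+1) (i+1) * q ^ (eTri (i+1)) * x ^ (i+1)
        = G q N (i+1) * q ^ (eTri (i+1)) * x ^ (i+1)
          + G q N i * q ^ (eTri i) * x ^ i * (x * q ^ N) := by
      intro i hi
      rw [Finset.mem_range] at hi
      obtain ⟨d, rfl⟩ : ∃ d, N = i + d + 1 := ⟨N - i - 1, by omega⟩
      rw [show i+d+1+1 = i+d+2 from rfl, G_pascal hq i d, eTri_succ]
      ring
    rw [Finset.sum_congr rfl hterm, Finset.sum_add_distrib,
        G_self hq, G_self hq, G_zero hq, G_zero hq, eTri_succ]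
    simp [eTri]
    ring

lemma sum_rev_eTri (n : ℕ) : ∑ j ∈ Finset.range n, (n - j) = eTri (n+1) := by
  induction n with
  | zero => simp [eTri]
  | succ n ih =>
    rw [Finset.sum_range_succ']
    simp only [Nat.succ_sub_succ, Nat.sub_zero, ih]
    rw [eTri_succ (n+1)]

variable {q a : ℂ}

lemma scalA (hq0 : q ≠ 0) (ha : a ≠ 0) (n : ℕ) :
    a^n * q^(eTri (n+1)) * (q^(eTri n) * ((q^n*a)⁻¹)^n) = 1 := by
  have hb : (q^n*a)^n ≠ 0 := pow_ne_zero _ (mul_ne_zero (pow_ne_zero _ hq0) ha)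
  rw [inv_pow]
  rw [show a^n * q^(eTri (n+1)) * (q^(eTri n) * ((q^n*a)^n)⁻¹)
      = (a^n * (q^(eTri (n+1)) * q^(eTri n))) * ((q^n*a)^n)⁻¹ by ring]
  rw [← pow_add, exp_a, mul_inv_eq_one₀ hb, mul_pow, ← pow_mul]
  ring

lemma scalB (hq0 : q ≠ 0) (ha : a ≠ 0) (s i : ℕ) :
    a^(s+i+1) * q^(eTri (s+i+2)) * (q^(eTri s) * ((q^(s+i+1)*a)⁻¹)^s)
      = a^(i+1) * q^(eTri (i+2)) := by
  have hb : (q^(s+i+1)*a)^s ≠ 0 := pow_ne_zero _ (mul_ne_zero (pow_ne_zero _ hq0) ha)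
  rw [inv_pow]
  rw [show a^(s+i+1) * q^(eTri (s+i+2)) * (q^(eTri s) * ((q^(s+i+1)*a)^s)⁻¹)
      = (a^(s+i+1) * (q^(eTri (s+i+2)) * q^(eTri s))) * ((q^(s+i+1)*a)^s)⁻¹ by ring]
  rw [← pow_add, exp_b, mul_inv_eq_iff_eq_mul₀ hb, mul_pow, ← pow_mul]
  rw [pow_add, pow_add, pow_add, pow_add]
  ring

lemma scalC (hq0 : q ≠ 0) (ha : a ≠ 0) (n i : ℕ) :
    a^n * q^(eTri (n+1)) * (q^(eTri (n+1+i)) * ((q^n*a)⁻¹)^(n+1+i))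
      = (a^(i+1))⁻¹ * q^(eTri (i+1)) := by
  have hb : (q^n*a)^(n+1+i) ≠ 0 := pow_ne_zero _ (mul_ne_zero (pow_ne_zero _ hq0) ha)
  have ha' : (a:ℂ)^(i+1) ≠ 0 := pow_ne_zero _ ha
  rw [inv_pow]
  rw [eq_comm, inv_mul_eq_iff_eq_mul₀ ha', eq_comm]
  rw [show a^(i+1) * (a^n * q^(eTri (n+1)) * (q^(eTri (n+1+i)) * ((q^n*a)^(n+1+i))⁻¹))
      = ((a^n * a^(i+1)) * (q^(eTri (n+1)) * q^(eTri (n+1+i)))) * ((q^n*a)^(n+1+i))⁻¹ by ring]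
  rw [← pow_add, ← pow_add, exp_c, mul_inv_eq_iff_eq_mul₀ hb, mul_pow, ← pow_mul]
  rw [pow_add, pow_add]
  ring


/-- Andrews' Bailey pair relative to `1`. -/
theorem andrews_bailey_pair (q a : ℂ) (hq : ‖q‖ < 1) (ha : a ≠ 0) (n : ℕ) :
    qPoch (-(a * q)) q n * qPoch (-1 / a) q n / qPoch q q (2 * n) =
    ∑ r ∈ Finset.range (n + 1),
      (if r = 0 then 1 else
        a ^ (-(r : ℤ)) * q ^ (r * (r - 1) / 2) + a ^ r * q ^ (r * (r + 1) / 2)) /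
        (qPoch q q (n - r) * qPoch q q (n + r)) := by
  have hsum0 : ∀ r ∈ Finset.range (n+1),
      (if r = 0 then (1:ℂ) else
        a ^ (-(r : ℤ)) * q ^ (r * (r - 1) / 2) + a ^ r * q ^ (r * (r + 1) / 2)) /
        (qPoch q q (n - r) * qPoch q q (n + r))
      = (if r = 0 then 1 else (a^r)⁻¹ * q ^ (eTri r) + a ^ r * q ^ (eTri (r+1))) /
        (qPoch q q (n - r) * qPoch q q (n + r)) := by
    intro r hr
    rw [eTri_eq, eTri_eq', zpow_neg, zpow_natCast]
  rw [Finset.sum_congr rfl hsum0]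
  by_cases hq0 : q = 0
  · subst hq0
    have h00 : ∀ m : ℕ, qPoch 0 0 m = 1 := by
      intro m; rw [qPoch]; apply Finset.prod_eq_one; intro k _; simp
    rw [show -(a*(0:ℂ)) = 0 by ring]
    simp only [h00, mul_one, one_mul, div_one]
    cases n with
    | zero => simp [qPoch, eTri]
    | succ m =>
      have hL : qPoch (-1/a) (0:ℂ) (m+1) = 1 + 1/a := by
        rw [qPoch, Finset.prod_range_succ']
        rw [Finset.prod_eq_one (fun k _ => by simp)]
        simp
        ring
      rw [hL, Finset.sum_range_succ', Finset.sum_range_succ']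
      rw [Finset.sum_eq_zero (fun k _ => by
        rw [if_neg (by omega : ¬ (k+1+1 = 0))]
        rw [show k+1+1 = (k+1)+1 from rfl, eTri_succ (k+1), eTri_succ (k+1+1)]
        rw [zero_pow (by omega), zero_pow (by omega)]
        simp)]
      simp [eTri, eTri_succ]
      ring
  · -- main case
    have hR : ∀ r ∈ Finset.range (n+1),
        (if r = 0 then (1:ℂ) else (a^r)⁻¹ * q ^ (eTri r) + a ^ r * q ^ (eTri (r+1))) /
          (qPoch q q (n - r) * qPoch q q (n + r))
        = (if r = 0 then (1:ℂ) else (a^r)⁻¹ * q ^ (eTri r) + a ^ r * q ^ (eTri (r+1))) *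
          G q (2*n) (n+r) / qPoch q q (2*n) := by
      intro r hr
      rw [Finset.mem_range] at hr
      rw [G, show 2*n - (n+r) = n - r by omega]
      field_simp [qPoch_ne_zero hq (n-r), qPoch_ne_zero hq (n+r), qPoch_ne_zero hq (2*n)]
    rw [Finset.sum_congr rfl hR, ← Finset.sum_div]
    congr 1
    -- key identity
    have hprod1 : qPoch (-(a*q)) q n
        = a^n * q^(eTri (n+1)) * ∏ k ∈ Finset.range n, (1 + (q^n*a)⁻¹ * q^k) := by
      have hrefl := Finset.prod_range_reflect (fun j => 1 + a * q^(n-j)) n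
      have h1 : qPoch (-(a*q)) q n = ∏ j ∈ Finset.range n, (1 + a * q^(n-j)) := by
        rw [← hrefl, qPoch]
        apply Finset.prod_congr rfl
        intro j hj
        rw [Finset.mem_range] at hj
        rw [show n - (n-1-j) = j+1 by omega, pow_succ']
        ring
      rw [h1]
      have h2 : ∀ j ∈ Finset.range n, (1 : ℂ) + a * q^(n-j)
          = a * q^(n-j) * (1 + (q^n*a)⁻¹ * q^j) := by
        intro j hj
        rw [Finset.mem_range] at hj
        obtain ⟨d, hd⟩ : ∃ d, n = j + (d+1) := ⟨n - j - 1, by omega⟩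
        rw [hd, show j + (d+1) - j = d+1 by omega]
        field_simp
        ring
      rw [Finset.prod_congr rfl h2, Finset.prod_mul_distrib, Finset.prod_mul_distrib,
          Finset.prod_const, Finset.prod_pow_eq_pow_sum, sum_rev_eTri, Finset.card_range]
    have hprod2 : qPoch (-1/a) q n = ∏ k ∈ Finset.range n, (1 + (q^n*a)⁻¹ * q^(n+k)) := by
      rw [qPoch]
      apply Finset.prod_congr rfl
      intro k hk
      rw [pow_add]
      field_simp
      ring
    have hX : qPoch (-(a*q)) q n * qPoch (-1/a) q n
        = a^n * q^(eTri (n+1)) * ∏ k ∈ Finset.range (2*n), (1 + (q^n*a)⁻¹ * q^k) := by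
      rw [show 2*n = n+n by ring, Finset.prod_range_add, hprod1, hprod2]
      ring
    rw [hX, gauss hq (2*n) ((q^n*a)⁻¹), Finset.mul_sum]
    rw [show 2*n+1 = (n+1)+n by ring, Finset.sum_range_add]
    rw [← Finset.sum_range_reflect
        (fun j => a^n * q^(eTri (n+1)) * (G q (2*n) j * q^(eTri j) * ((q^n*a)⁻¹)^j)) (n+1)]
    rw [Finset.sum_range_succ']
    rw [Finset.sum_range_succ']
    -- middle term
    have hmid : a^n * q^(eTri (n+1)) *
        (G q (2*n) (n+1-1-0) * q^(eTri (n+1-1-0)) * ((q^n*a)⁻¹)^(n+1-1-0))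
        = G q (2*n) n := by
      rw [show n+1-1-0 = n by omega]
      rw [show a^n * q^(eTri (n+1)) * (G q (2*n) n * q^(eTri n) * ((q^n*a)⁻¹)^n)
          = (a^n * q^(eTri (n+1)) * (q^(eTri n) * ((q^n*a)⁻¹)^n)) * G q (2*n) n by ring,
        scalA hq0 ha n, one_mul]
    have hS : ∀ i ∈ Finset.range n,
        a^n * q^(eTri (n+1)) *
          (G q (2*n) (n+1-1-(i+1)) * q^(eTri (n+1-1-(i+1))) * ((q^n*a)⁻¹)^(n+1-1-(i+1)))
        + a^n * q^(eTri (n+1)) *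
          (G q (2*n) ((n+1)+i) * q^(eTri ((n+1)+i)) * ((q^n*a)⁻¹)^((n+1)+i))
        = (if i+1 = 0 then (1:ℂ) else
            (a^(i+1))⁻¹ * q ^ (eTri (i+1)) + a^(i+1) * q ^ (eTri (i+1+1))) *
          G q (2*n) (n+(i+1)) := by
      intro i hi
      rw [Finset.mem_range] at hi
      rw [if_neg (Nat.succ_ne_zero i)]
      obtain ⟨s, rfl⟩ : ∃ s, n = s+i+1 := ⟨n-i-1, by omega⟩
      have hGsym : G q (2*(s+i+1)) s = G q (2*(s+i+1)) ((s+i+1)+(i+1)) := by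
        have := G_symm q (show (s+i+1)+(i+1) ≤ 2*(s+i+1) by omega)
        rwa [show 2*(s+i+1) - ((s+i+1)+(i+1)) = s by omega] at this
      rw [show (s+i+1)+1-1-(i+1) = s by omega, hGsym]
      have sB := scalB (q := q) (a := a) hq0 ha s i
      have sC := scalC (q := q) (a := a) hq0 ha (s+i+1) i
      rw [show s+i+2 = s+i+1+1 by omega] at sB
      rw [show (s+i+1)+1+i = (s+i+1)+(i+1) by omega] at sC ⊢
      rw [show i+1+1 = i+2 by omega]
      linear_combination (G q (2*(s+i+1)) ((s+i+1)+(i+1))) * sB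
        + (G q (2*(s+i+1)) ((s+i+1)+(i+1))) * sC
    rw [hmid, add_right_comm, ← Finset.sum_add_distrib, Finset.sum_congr rfl hS]
    norm_num
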